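/- With X(a,λ) = (a, aλ) parametrizing rank-r matrices (a of maximal rank r), a p×q matrix N is normal to the image of X at (a,λ) iff N has the form (wλᵀ, -w) where the columns of the p×(q-r) matrix w lie in the kernel of aᵀ; equivalently, ⟨DX(c,μ), (wλᵀ, -w)⟩ = 0 for all (c,μ) exactly when aᵀw = 0. -/

import Mathlib

open Matrix

private lemma trace_key {m n : ℕ} (M : Matrix (Fin m) (Fin n) ℝ)
    (h : ∀ c : Matrix (Fin m) (Fin n) ℝ, (cᵀ * M).trace = 0) : M = 0 := by
  have hM := h M
  have : ∑ j, ∑ i, M i j * M i j = 0 := by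
    simpa [Matrix.trace, Matrix.mul_apply, Matrix.diag] using hM
  ext i j
  have hz : ∀ j ∈ Finset.univ, ∑ i, M i j * M i j = 0 := by
    intro j _
    have := (Finset.sum_eq_zero_iff_of_nonneg (fun j _ => Finset.sum_nonneg
      (fun i _ => mul_self_nonneg (M i j)))).mp this
    exact this j (Finset.mem_univ j)
  have := (Finset.sum_eq_zero_iff_of_nonneg
    (fun i _ => mul_self_nonneg (M i j))).mp (hz j (Finset.mem_univ j)) i (Finset.mem_univ i)
  simpa using mul_self_eq_zero.mp this

private lemma trace_split {p r s : ℕ}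
    (a : Matrix (Fin p) (Fin r) ℝ) (lam : Matrix (Fin r) (Fin s) ℝ)
    (N₁ : Matrix (Fin p) (Fin r) ℝ) (N₂ : Matrix (Fin p) (Fin s) ℝ)
    (c : Matrix (Fin p) (Fin r) ℝ) (μ : Matrix (Fin r) (Fin s) ℝ) :
    (cᵀ * N₁).trace + ((c * lam + a * μ)ᵀ * N₂).trace
      = (cᵀ * (N₁ + N₂ * lamᵀ)).trace + (μᵀ * (aᵀ * N₂)).trace := by
  have h1 : ((c * lam)ᵀ * N₂).trace = (cᵀ * (N₂ * lamᵀ)).trace := by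
    rw [Matrix.transpose_mul, Matrix.mul_assoc, Matrix.trace_mul_comm, Matrix.mul_assoc]
  have h2 : ((a * μ)ᵀ * N₂).trace = (μᵀ * (aᵀ * N₂)).trace := by
    rw [Matrix.transpose_mul, Matrix.mul_assoc]
  rw [Matrix.transpose_add, Matrix.add_mul, Matrix.trace_add, h1, h2,
    Matrix.mul_add, Matrix.trace_add]
  ring

theorem stmt9 (p q r : ℕ) (hr : r ≤ q)
    (a : Matrix (Fin p) (Fin r) ℝ) (ha : a.rank = r)
    (lam : Matrix (Fin r) (Fin (q - r)) ℝ) :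
    (∀ (N₁ : Matrix (Fin p) (Fin r) ℝ) (N₂ : Matrix (Fin p) (Fin (q - r)) ℝ),
      (∀ (c : Matrix (Fin p) (Fin r) ℝ) (μ : Matrix (Fin r) (Fin (q - r)) ℝ),
          (cᵀ * N₁).trace + ((c * lam + a * μ)ᵀ * N₂).trace = 0) ↔
        ∃ w : Matrix (Fin p) (Fin (q - r)) ℝ, aᵀ * w = 0 ∧ N₁ = w * lamᵀ ∧ N₂ = -w) ∧
    (∀ w : Matrix (Fin p) (Fin (q - r)) ℝ,
      (∀ (c : Matrix (Fin p) (Fin r) ℝ) (μ : Matrix (Fin r) (Fin (q - r)) ℝ),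
          (cᵀ * (w * lamᵀ)).trace + ((c * lam + a * μ)ᵀ * (-w)).trace = 0) ↔
        aᵀ * w = 0) := by
  constructor
  · intro N₁ N₂
    constructor
    · intro h
      have h' : ∀ (c : Matrix (Fin p) (Fin r) ℝ) (μ : Matrix (Fin r) (Fin (q - r)) ℝ), (cᵀ * (N₁ + N₂ * lamᵀ)).trace + (μᵀ * (aᵀ * N₂)).trace = 0 := by
        intro c μ; rw [← trace_split a lam]; exact h c μ
      have hA : N₁ + N₂ * lamᵀ = 0 := by
        apply trace_key; intro c
        have := h' c 0; simpa using this
      have hB : aᵀ * N₂ = 0 := by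
        apply trace_key; intro μ
        have := h' 0 μ; simpa using this
      refine ⟨-N₂, ?_, ?_, by simp⟩
      · rw [Matrix.mul_neg, hB, neg_zero]
      · have := eq_neg_of_add_eq_zero_left hA
        simpa [Matrix.neg_mul] using this
    · rintro ⟨w, hw, rfl, rfl⟩
      intro c μ
      rw [trace_split a lam]
      have h1 : w * lamᵀ + (-w) * lamᵀ = 0 := by
        rw [Matrix.neg_mul]; abel
      rw [h1, Matrix.mul_neg, hw, neg_zero, Matrix.mul_zero, Matrix.mul_zero,
        Matrix.trace_zero, Matrix.trace_zero, add_zero]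
  · intro w
    constructor
    · intro h
      apply trace_key
      intro μ
      have := h 0 μ
      rw [trace_split a lam] at this
      have h1 : (w * lamᵀ + (-w) * lamᵀ) = 0 := by rw [Matrix.neg_mul]; abel
      rw [h1] at this
      simp only [Matrix.mul_zero, Matrix.trace_zero, zero_add] at this
      have : (μᵀ * -(aᵀ * w)).trace = 0 := by
        simpa [Matrix.mul_neg] using this
      rw [Matrix.mul_neg, Matrix.trace_neg, neg_eq_zero] at this
      exact this
    · intro hw c μ
      rw [trace_split a lam]
      have h1 : w * lamᵀ + (-w) * lamᵀ = 0 := by rw [Matrix.neg_mul]; abel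
      rw [h1, Matrix.mul_neg, hw, neg_zero, Matrix.mul_zero, Matrix.mul_zero,
        Matrix.trace_zero, Matrix.trace_zero, add_zero]
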